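/- Let f ∈ ℝ[X₁,…,Xₙ] with V = {f = 0} nonempty compact and ∇f ≠ 0 on V. Suppose W_{n-1}, the set of complex common zeros of f, ∂f/∂X₁, …, ∂f/∂X_{n-1} with Δ ≠ 0 (Zariski closure), is finite. Then W_{n-1} ∩ ℝⁿ is nonempty, and every connected component of V contains at least one point of W_{n-1} ∩ ℝⁿ. -/

import Mathlib

open MvPolynomial

/-- Zariski closure in affine n-space over ℂ. -/
noncomputable def zClosure {n : ℕ} (S : Set (Fin n → ℂ)) : Set (Fin n → ℂ) :=
  MvPolynomial.zeroLocus ℂ (MvPolynomial.vanishingIdeal ℂ S)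

/-- A set is Zariski closed if it equals its Zariski closure. -/
def IsZClosed {n : ℕ} (S : Set (Fin n → ℂ)) : Prop := S = zClosure S

/-- Dimension of an affine algebraic set as Krull dimension of its coordinate ring. -/
noncomputable def cDim {n : ℕ} (S : Set (Fin n → ℂ)) : WithBot (WithTop ℕ) :=
  ringKrullDim (MvPolynomial (Fin n) ℂ ⧸ MvPolynomial.vanishingIdeal ℂ S)

/-- Real dimension of a real algebraic set. -/
noncomputable def rDim {n : ℕ} (S : Set (Fin n → ℝ)) : WithBot (WithTop ℕ) :=
  ringKrullDim (MvPolynomial (Fin n) ℝ ⧸ MvPolynomial.vanishingIdeal ℝ S)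

/-- `C` is an irreducible component of `W`: irreducible Zariski closed subset of `W`,
maximal among such. -/
def IsIrredComponent {n : ℕ} (W C : Set (Fin n → ℂ)) : Prop :=
  IsZClosed C ∧ (MvPolynomial.vanishingIdeal ℂ C).IsPrime ∧ C ⊆ W ∧
    ∀ C' : Set (Fin n → ℂ), IsZClosed C' → (MvPolynomial.vanishingIdeal ℂ C').IsPrime →
      C ⊆ C' → C' ⊆ W → C' = C

/-- Rank at `x` of the Jacobian matrix of the family of polynomials `g`. -/
noncomputable def jrank {n k : ℕ} (g : Fin k → MvPolynomial (Fin n) ℂ) (x : Fin n → ℂ) : ℕ :=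
  (Matrix.of fun (j : Fin k) (l : Fin n) =>
    MvPolynomial.eval x (MvPolynomial.pderiv l (g j))).rank

/-- `x` is a smooth point of the `r`-dimensional variety `C`: there are `n - r` polynomials
vanishing on `C` whose Jacobian at `x` has rank `n - r`. -/
def IsSmoothPtOf {n : ℕ} (C : Set (Fin n → ℂ)) (r : ℕ) (x : Fin n → ℂ) : Prop :=
  x ∈ C ∧ ∃ g : Fin (n - r) → MvPolynomial (Fin n) ℂ,
    (∀ j, g j ∈ MvPolynomial.vanishingIdeal ℂ C) ∧ jrank g x = n - r

/-- The canonical inclusion ℝⁿ → ℂⁿ. -/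
def cx {n : ℕ} (x : Fin n → ℝ) : Fin n → ℂ := fun j => (x j : ℂ)

/-- An irreducible component of `W` is real if it contains a real point which is a
smooth point of it. -/
def IsRealComponent {n : ℕ} (W C : Set (Fin n → ℂ)) : Prop :=
  IsIrredComponent W C ∧ ∃ (r : ℕ) (x : Fin n → ℝ),
    cDim C = (r : WithBot (WithTop ℕ)) ∧ IsSmoothPtOf C r (cx x)

/-- Geometric degree of an irreducible variety: the maximal (finite, nonzero) number of
points cut out on `C` by an affine-linear subspace of complementary dimension. -/
noncomputable def gDeg {n : ℕ} (C : Set (Fin n → ℂ)) : ℕ :=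
  sSup {m : ℕ | ∃ (r : ℕ) (L : Fin r → MvPolynomial (Fin n) ℂ),
    cDim C = (r : WithBot (WithTop ℕ)) ∧ (∀ j, (L j).totalDegree ≤ 1) ∧
    (C ∩ {x | ∀ j, MvPolynomial.eval x (L j) = 0}).Finite ∧
    (C ∩ {x | ∀ j, MvPolynomial.eval x (L j) = 0}).Nonempty ∧
    m = (C ∩ {x | ∀ j, MvPolynomial.eval x (L j) = 0}).ncard}

open Set in

lemma hasStrictFDerivAt_mveval {m : ℕ} (y : Fin m → ℝ) (p : MvPolynomial (Fin m) ℝ) :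
    HasStrictFDerivAt (fun x : Fin m → ℝ => eval x p)
      (∑ j : Fin m, eval y (pderiv j p) • ContinuousLinearMap.proj (R := ℝ) (φ := fun _ : Fin m => ℝ) j) y := by
  induction p using MvPolynomial.induction_on with
  | C a =>
      simp only [eval_C, pderiv_C, map_zero, zero_smul, Finset.sum_const_zero]
      exact hasStrictFDerivAt_const a y
  | add p q hp hq =>
      simp only [map_add, add_smul, Finset.sum_add_distrib]
      exact hp.add hq
  | mul_X p i hp =>
      have h := hp.mul ((ContinuousLinearMap.proj (R := ℝ) (φ := fun _ : Fin m => ℝ) i).hasStrictFDerivAt (x := y))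
      simp only [eval_X, map_mul, ContinuousLinearMap.proj_apply] at h ⊢
      have term : ∀ j : Fin m, eval y (pderiv j (p * X i))
          = eval y (pderiv j p) * y i + (if j = i then eval y p else 0) := by
        intro j
        rw [pderiv_mul, pderiv_X]
        rcases eq_or_ne j i with rfl | hji
        · simp
        · simp [Pi.single_apply, hji, Ne.symm hji]
      have key : (∑ j : Fin m, eval y (pderiv j (p * X i)) • ContinuousLinearMap.proj (R := ℝ) (φ := fun _ : Fin m => ℝ) j)
          = eval y p • ContinuousLinearMap.proj i + y i • ∑ j : Fin m, eval y (pderiv j p) • ContinuousLinearMap.proj (R := ℝ) (φ := fun _ : Fin m => ℝ) j := by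
        simp only [term, add_smul, Finset.sum_add_distrib, ite_smul, zero_smul,
          Finset.sum_ite_eq' Finset.univ i, Finset.mem_univ, if_true, Finset.smul_sum,
          smul_smul, mul_comm (y i)]
        rw [add_comm]
      rw [key]
      exact h

open Set in

lemma aux_nbhd {E : Type*} [NormedAddCommGroup E] [NormedSpace ℝ E] [CompleteSpace E]
    {f : E → ℝ} {f' : E →L[ℝ] ℝ} {a : E} (hf : HasStrictFDerivAt f f' a) (hf' : f' ≠ 0)
    (ha : f a = 0) :
    ∃ U ∈ nhds a, {x | f x = 0} ∩ U ⊆ connectedComponentIn {x | f x = 0} a := by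
  have hsur : LinearMap.range (f' : E →ₗ[ℝ] ℝ) = ⊤ := by
    obtain ⟨v, hv⟩ : ∃ v, f' v ≠ 0 := by
      by_contra hc
      push_neg at hc
      exact hf' (by ext w; simp [hc w])
    rw [LinearMap.range_eq_top]
    intro c
    exact ⟨(c / f' v) • v, by simp [div_mul_cancel₀, hv]⟩
  set h := hf.implicitToOpenPartialHomeomorph f f' hsur with hh
  have hasrc : a ∈ h.source := hf.mem_implicitToOpenPartialHomeomorph_source hsur
  have hatgt : h a ∈ h.target := h.map_source hasrc
  obtain ⟨ε, hε, hball⟩ := Metric.isOpen_iff.1 h.open_target _ hatgt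
  set S : Set (ℝ × (LinearMap.ker (f' : E →ₗ[ℝ] ℝ))) := {p | p.1 = f a} with hS
  have hSconv : Convex ℝ (Metric.ball (h a) ε ∩ S) :=
    (convex_ball _ _).inter ((convex_singleton (f a)).linear_preimage (LinearMap.fst ℝ ℝ _))
  set P : Set E := h.symm '' (Metric.ball (h a) ε ∩ S) with hP
  have hsub : Metric.ball (h a) ε ∩ S ⊆ h.target := fun p hp => hball hp.1
  have hPpc : IsPreconnected P :=
    hSconv.isPreconnected.image _ (h.continuousOn_symm.mono hsub)
  have hfst : ∀ x, (h x).1 = f x := fun x =>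
    hf.implicitToOpenPartialHomeomorph_fst hsur x
  have haP : a ∈ P := by
    refine ⟨h a, ⟨Metric.mem_ball_self hε, (hfst a)⟩, h.left_inv hasrc⟩
  have hPV : P ⊆ {x | f x = 0} := by
    rintro x ⟨p, hp, rfl⟩
    have : f (h.symm p) = (h (h.symm p)).1 := (hfst _).symm
    rw [Set.mem_setOf_eq, this, h.right_inv (hsub hp)]
    exact hp.2.trans ha
  refine ⟨h.source ∩ h ⁻¹' (Metric.ball (h a) ε),
    (h.isOpen_inter_preimage Metric.isOpen_ball).mem_nhds ⟨hasrc, Metric.mem_ball_self hε⟩, ?_⟩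
  rintro x ⟨hx0, hxs, hxb⟩
  have hxP : x ∈ P := ⟨h x, ⟨hxb, (hfst x).trans (hx0.trans ha.symm)⟩, h.left_inv hxs⟩
  exact hPpc.subset_connectedComponentIn haP hPV hxP

open Set in

lemma evalR_cx {m : ℕ} (y : Fin m → ℝ) (p : MvPolynomial (Fin m) ℝ) :
    eval (fun j => ((y j : ℝ) : ℂ)) (MvPolynomial.map (algebraMap ℝ ℂ) p)
      = ((eval y p : ℝ) : ℂ) := by
  rw [eval_map]
  induction p using MvPolynomial.induction_on with
  | C a => simp [Complex.coe_algebraMap]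
  | add p q hp hq => simp [hp, hq]
  | mul_X p i hp => simp [hp]


/-- Geometric core of Theorem 8: if the smallest polar variety `W_{n-1}` (over ℂ, in
`n + 1` variables, cut out by `f` and all partial derivatives but the last, away from
`Δ = 0`) is finite, then its real points are nonempty and meet every connected component
of the compact smooth hypersurface `V = {f = 0} ⊆ ℝ^(n+1)`. -/
theorem stmt16 (n : ℕ) (f : MvPolynomial (Fin (n + 1)) ℝ)
    (Δ : MvPolynomial (Fin (n + 1)) ℝ)
    (hΔ : Δ = ∑ j : Fin (n + 1), (MvPolynomial.pderiv j f) ^ 2)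
    (V : Set (Fin (n + 1) → ℝ)) (hV : V = {x | MvPolynomial.eval x f = 0})
    (hne : V.Nonempty) (hcpt : IsCompact V)
    (hreg : ∀ x ∈ V, ∃ j, MvPolynomial.eval x (MvPolynomial.pderiv j f) ≠ 0)
    (fC ΔC : MvPolynomial (Fin (n + 1)) ℂ)
    (hfC : fC = MvPolynomial.map (algebraMap ℝ ℂ) f)
    (hΔC : ΔC = MvPolynomial.map (algebraMap ℝ ℂ) Δ)
    (Wn : Set (Fin (n + 1) → ℂ))
    (hWn : Wn = zClosure {z | MvPolynomial.eval z fC = 0 ∧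
      (∀ j : Fin (n + 1), j ≠ Fin.last n →
        MvPolynomial.eval z (MvPolynomial.pderiv j fC) = 0) ∧
      MvPolynomial.eval z ΔC ≠ 0})
    (hfin : Wn.Finite) :
    (Wn ∩ Set.range (cx (n := n + 1))).Nonempty ∧
    ∀ x ∈ V, ∃ y ∈ connectedComponentIn V x, cx y ∈ Wn := by
  
  -- Main claim: every component contains a point where the first n partials vanish
  -- and the last does not.
  have key : ∀ x ∈ V, ∃ y ∈ connectedComponentIn V x,
      (∀ j : Fin (n + 1), j ≠ Fin.last n → eval y (pderiv j f) = 0) ∧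
      eval y (pderiv (Fin.last n) f) ≠ 0 := by
    intro x hx
    set K := connectedComponentIn V x with hK
    have hKV : K ⊆ V := connectedComponentIn_subset V x
    have hxK : x ∈ K := mem_connectedComponentIn hx
    have hKclosed : IsClosed K := by
      refine isClosed_of_closure_subset ?_
      refine IsPreconnected.subset_connectedComponentIn
        (isPreconnected_connectedComponentIn.closure) (subset_closure hxK) ?_
      exact closure_minimal hKV hcpt.isClosed
    have hKcpt : IsCompact K := hcpt.of_isClosed_subset hKclosed hKV
    have hφ : Continuous (fun z : Fin (n + 1) → ℝ => z (Fin.last n)) := continuous_apply _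
    obtain ⟨y, hyK, hymax⟩ := hKcpt.exists_isMaxOn ⟨x, hxK⟩ hφ.continuousOn
    have hyV : y ∈ V := hKV hyK
    have hyf : eval y f = 0 := by rw [hV] at hyV; exact hyV
    -- derivative of the defining polynomial at y
    set f' : (Fin (n + 1) → ℝ) →L[ℝ] ℝ :=
      ∑ j : Fin (n + 1), eval y (pderiv j f) • ContinuousLinearMap.proj (R := ℝ) (φ := fun _ : Fin (n + 1) => ℝ) j with hf'def
    have hD : HasStrictFDerivAt (fun z : Fin (n + 1) → ℝ => eval z f) f' y :=
      hasStrictFDerivAt_mveval y f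
    have hf'single : ∀ l : Fin (n + 1), f' (Pi.single l 1) = eval y (pderiv l f) := by
      intro l
      simp [hf'def, ContinuousLinearMap.sum_apply, Pi.single_apply,
        Finset.sum_ite_eq' Finset.univ l]
    have hf'ne : f' ≠ 0 := by
      obtain ⟨j, hj⟩ := hreg y hyV
      intro hc
      apply hj
      rw [← hf'single j, hc]
      rfl
    -- local connectedness: nearby points of V are in K
    obtain ⟨U, hU, hUK⟩ := aux_nbhd hD hf'ne hyf
    have hVset : V = {z : Fin (n + 1) → ℝ | eval z f = 0} := hV
    have hKy : connectedComponentIn V y = K := (connectedComponentIn_eq hyK).symm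
    -- local max of last coordinate on V at y
    have hlocmax : IsLocalMaxOn (fun z : Fin (n + 1) → ℝ => z (Fin.last n)) V y := by
      have hUmem : U ∈ nhdsWithin y V := nhdsWithin_le_nhds hU
      filter_upwards [hUmem, self_mem_nhdsWithin] with z hzU hzV
      have hzK : z ∈ K := by
        have hz2 : z ∈ connectedComponentIn V y := by
          rw [hVset] at hzV ⊢
          exact hUK ⟨hzV, hzU⟩
        rwa [hKy] at hz2
      exact hymax hzK
    have hextr : IsLocalExtrOn (fun z : Fin (n + 1) → ℝ => z (Fin.last n))
        {z : Fin (n + 1) → ℝ | eval z f = eval y f} y := by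
      refine Or.inr ?_
      have : {z : Fin (n + 1) → ℝ | eval z f = eval y f} = V := by
        rw [hyf, hV]
      rw [this]
      exact hlocmax
    obtain ⟨a, b, hab, heq⟩ := hextr.exists_multipliers_of_hasStrictFDerivAt_1d hD
      ((ContinuousLinearMap.proj (R := ℝ) (φ := fun _ : Fin (n + 1) => ℝ) (Fin.last n)).hasStrictFDerivAt)
    have happ : ∀ l : Fin (n + 1),
        a * eval y (pderiv l f) + b * ((Pi.single l (1:ℝ) : (Fin (n+1)) → ℝ) (Fin.last n)) = 0 := by
      intro l
      have := congrFun (congrArg (DFunLike.coe) heq) (Pi.single l 1)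
      simpa [hf'single l, smul_eq_mul] using this
    have hane : a ≠ 0 := by
      intro h0
      have hb := happ (Fin.last n)
      simp [h0] at hb
      exact hab (by simp [h0, hb, Prod.ext_iff])
    have hvanish : ∀ j : Fin (n + 1), j ≠ Fin.last n → eval y (pderiv j f) = 0 := by
      intro j hj
      have h1 := happ j
      rw [Pi.single_apply, if_neg (Ne.symm hj)] at h1
      have h2 : a * eval y (pderiv j f) = 0 := by simpa using h1
      exact (mul_eq_zero.1 h2).resolve_left hane
    have hlast : eval y (pderiv (Fin.last n) f) ≠ 0 := by
      obtain ⟨j, hj⟩ := hreg y hyV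
      rcases eq_or_ne j (Fin.last n) with rfl | hjn
      · exact hj
      · exact absurd (hvanish j hjn) hj
    exact ⟨y, hyK, hvanish, hlast⟩
  -- transfer a real critical point to the complex polar variety
  have hmem : ∀ y : Fin (n + 1) → ℝ,
      (∀ j : Fin (n + 1), j ≠ Fin.last n → eval y (pderiv j f) = 0) →
      eval y (pderiv (Fin.last n) f) ≠ 0 → eval y f = 0 → cx y ∈ Wn := by
    intro y hvan hlast hyf
    have hcx : cx y = fun j => ((y j : ℝ) : ℂ) := rfl
    have h1 : eval (cx y) fC = 0 := by
      rw [hfC, hcx, evalR_cx, hyf, Complex.ofReal_zero]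
    have h2 : ∀ j : Fin (n + 1), j ≠ Fin.last n →
        eval (cx y) (pderiv j fC) = 0 := by
      intro j hj
      rw [hfC, pderiv_map, hcx, evalR_cx, hvan j hj, Complex.ofReal_zero]
    have hΔy : eval y Δ ≠ 0 := by
      rw [hΔ]
      simp only [map_sum, map_pow]
      intro hc
      have hnneg : ∀ j ∈ Finset.univ, (0:ℝ) ≤ (eval y (pderiv j f)) ^ 2 :=
        fun j _ => sq_nonneg _
      have := (Finset.sum_eq_zero_iff_of_nonneg hnneg).1 hc (Fin.last n) (Finset.mem_univ _)
      exact hlast (sq_eq_zero_iff.1 this)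
    have h3 : eval (cx y) ΔC ≠ 0 := by
      rw [hΔC, hcx, evalR_cx]
      exact_mod_cast hΔy
    rw [hWn]
    exact zeroLocus_vanishingIdeal_le (k := ℂ) _ ⟨h1, h2, h3⟩
  have main : ∀ x ∈ V, ∃ y ∈ connectedComponentIn V x, cx y ∈ Wn := by
    intro x hx
    obtain ⟨y, hyK, hvan, hlast⟩ := key x hx
    have hyV : y ∈ V := connectedComponentIn_subset V x hyK
    have hyf : eval y f = 0 := by rw [hV] at hyV; exact hyV
    exact ⟨y, hyK, hmem y hvan hlast hyf⟩
  refine ⟨?_, main⟩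
  obtain ⟨x, hx⟩ := hne
  obtain ⟨y, _, hyW⟩ := main x hx
  exact ⟨cx y, hyW, ⟨y, rfl⟩⟩
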